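/- Consider an MIP with matrix A ∈ [0,1]^{m×N} and a fractional solution x* ∈ [0,1]^N satisfying Σ_{j ∈ [ℓ_i]} x*_{i,j} = 1 for every i ∈ [n]. Let b = Ax*, assume b_r > 0 for every r ∈ [m], and let y* = max_{r ∈ [m]} b_r. Then for every positive integer k such that G(y*, k/y*) ≤ 1/(e·k·t), there exists an integral vector z ∈ {0,1}^N with exactly one entry equal to 1 in each block {(i,j) : j ∈ [ℓ_i]} such that (Az)_r ≤ b_r + k for every r ∈ [m]. -/

import Mathlib

/-- The Chernoff–Hoeffding bound function `G(μ, δ) = (e^δ / (1+δ)^(1+δ))^μ`. -/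
noncomputable def chernoffG (μ δ : ℝ) : ℝ :=
  (Real.exp δ / (1 + δ) ^ (1 + δ)) ^ μ

open Finset

open Finset

/-- convexity-type bound for falling-factorial products -/
lemma kconv' : ∀ (k : ℕ) (A u : ℝ), 0 ≤ u → u ≤ 1 → (k : ℝ) - 1 ≤ A →
    (∏ j ∈ range k, (A + u - j)) ≤
      (1 - u) * (∏ j ∈ range k, (A - j)) + u * ∏ j ∈ range k, (A + 1 - j) := by
  intro k
  induction k with
  | zero => intro A u h0 h1 _; simp
  | succ k ih =>
    intro A u h0 h1 hA
    have hA' : (k : ℝ) - 1 ≤ A - 1 := by push_cast at hA ⊢; linarith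
    have hAk : (k : ℝ) ≤ A := by push_cast at hA; linarith
    -- reindex: ∏_{j<k+1} (A+u-j) = (A+u) * ∏_{j<k} ((A-1)+u-j)
    have e1 : ∀ B : ℝ, (∏ j ∈ range (k+1), (B - j)) = B * ∏ j ∈ range k, (B - 1 - j) := by
      intro B
      rw [Finset.prod_range_succ' (fun j => (B - j))]
      push_cast
      rw [mul_comm]
      congr 1
      · norm_num
      · apply Finset.prod_congr rfl; intro j _; push_cast; ring
    have e2 : (∏ j ∈ range (k+1), (A + u - j)) = (A + u) * ∏ j ∈ range k, ((A - 1) + u - j) := by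
      rw [e1 (A + u)]; congr 1; apply Finset.prod_congr rfl; intro j _; ring
    have e3 : (∏ j ∈ range (k+1), (A - j)) = A * ∏ j ∈ range k, ((A - 1) - j) := e1 A
    have e4 : (∏ j ∈ range (k+1), (A + 1 - j)) = (A + 1) * ∏ j ∈ range k, (A - j) := by
      rw [e1 (A + 1)]; congr 1; apply Finset.prod_congr rfl; intro j _; ring
    set P := ∏ j ∈ range k, ((A - 1) - j) with hP
    set Q := ∏ j ∈ range k, (A - j) with hQ
    have hPQ : P ≤ Q := by
      apply Finset.prod_le_prod
      · intro j hj
        simp only [Finset.mem_range] at hj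
        have : (j : ℝ) ≤ (k : ℝ) - 1 := by
          have : (j : ℝ) + 1 ≤ k := by exact_mod_cast hj
          linarith
        linarith
      · intro j _; linarith
    have hP0 : 0 ≤ P := by
      apply Finset.prod_nonneg
      intro j hj
      simp only [Finset.mem_range] at hj
      have : (j : ℝ) + 1 ≤ k := by exact_mod_cast hj
      linarith
    have hk0 : (0:ℝ) ≤ k := Nat.cast_nonneg k
    have hAu : 0 ≤ A + u := by linarith
    have ihk := ih (A - 1) u h0 h1 hA'
    have ihk' : (∏ j ∈ range k, ((A - 1) + u - j)) ≤ (1 - u) * P + u * Q := by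
      refine le_trans ihk ?_
      have : (∏ j ∈ range k, ((A - 1) + 1 - j)) = Q := by
        apply Finset.prod_congr rfl; intro j _; ring_nf
      rw [this]
    calc (∏ j ∈ range (k+1), (A + u - j)) = (A + u) * ∏ j ∈ range k, ((A - 1) + u - j) := e2
      _ ≤ (A + u) * ((1 - u) * P + u * Q) := mul_le_mul_of_nonneg_left ihk' hAu
      _ ≤ (1 - u) * (A * P) + u * ((A + 1) * Q) := by nlinarith [mul_nonneg (mul_nonneg h0 (sub_nonneg.2 h1)) (sub_nonneg.2 hPQ)]
      _ = (1 - u) * (∏ j ∈ range (k+1), (A - j)) + u * ∏ j ∈ range (k+1), (A + 1 - j) := by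
          rw [e3, e4]


lemma prod_shift (k : ℕ) (B : ℝ) :
    (∏ j ∈ range (k+1), (B - j)) = (∏ j ∈ range k, (B - 1 - j)) * B := by
  rw [Finset.prod_range_succ' (fun j => (B - j))]
  congr 1
  · apply Finset.prod_congr rfl; intro j _; push_cast; ring
  · norm_num

lemma pascal (k : ℕ) (A : ℝ) :
    (∏ j ∈ range (k+1), (A + 1 - j)) =
      (∏ j ∈ range (k+1), (A - j)) + ((k:ℝ)+1) * ∏ j ∈ range k, (A - j) := by
  have h1 : (∏ j ∈ range (k+1), (A + 1 - j)) = (∏ j ∈ range k, (A - j)) * (A + 1) := by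
    rw [prod_shift k (A+1)]
    congr 1
    apply Finset.prod_congr rfl; intro j _; ring
  rw [h1, Finset.prod_range_succ]
  push_cast
  ring



lemma psi1 (k : ℕ) (A u : ℝ) (h0 : 0 ≤ u) (h1 : u ≤ 1) (hA : (k : ℝ) ≤ A) :
    (∏ j ∈ range (k+1), (A + u - j)) ≤
      (∏ j ∈ range (k+1), (A - j)) + u * ((k:ℝ)+1) * ∏ j ∈ range k, (A - j) := by
  have hc := kconv' (k+1) A u h0 h1 (by push_cast; linarith)
  rw [pascal k A] at hc
  nlinarith [hc]

lemma psi2 (k : ℕ) (A u : ℝ) (h0 : 0 ≤ u) (h1 : u ≤ 1) (hA : (k : ℝ) - 1 ≤ A)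
    (hA2 : A < k) (hAu : (k : ℝ) ≤ A + u) :
    (∏ j ∈ range (k+1), (A + u - j)) ≤ u * ((k:ℝ)+1) * ∏ j ∈ range k, (A - j) := by
  rcases k with _ | k'
  · simp only [Nat.cast_zero] at hA2 hAu ⊢
    simp only [zero_add, Finset.prod_range_one, Nat.cast_zero, Finset.range_zero,
      Finset.prod_empty]
    linarith
  · set k : ℕ := k' + 1 with hk
    have hk1 : (k:ℝ) = (k':ℝ) + 1 := by rw [hk]; push_cast; ring
    have hR0 : (0:ℝ) ≤ ∏ j ∈ range k', (A - j) := by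
      apply Finset.prod_nonneg
      intro j hj
      simp only [mem_range] at hj
      have : (j:ℝ) + 1 ≤ (k':ℝ) := by exact_mod_cast hj
      rw [hk1] at hA; linarith
    -- LHS = (∏_{j<k'+1} (A+u-1-j)) * (A+u)
    have e2 : (∏ j ∈ range (k+1), (A + u - j))
        = ((∏ j ∈ range k', (A + u - 1 - j)) * (A + u - 1 - k')) * (A + u) := by
      rw [show k + 1 = (k'+1) + 1 from rfl, prod_shift (k'+1) (A+u)]
      congr 1
      rw [Finset.prod_range_succ]
    have hmid : (∏ j ∈ range k', (A + u - 1 - j)) ≤ ∏ j ∈ range k', (A - j) := by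
      apply Finset.prod_le_prod
      · intro j hj
        simp only [mem_range] at hj
        have : (j:ℝ) + 1 ≤ (k':ℝ) := by exact_mod_cast hj
        rw [hk1] at hAu; linarith
      · intro j _; linarith
    have hlast : 0 ≤ A + u - 1 - k' := by rw [hk1] at hAu; linarith
    have hAu0 : 0 ≤ A + u := by
      have : (0:ℝ) ≤ (k':ℝ) := Nat.cast_nonneg k'
      rw [hk1] at hAu; linarith
    have key : (A + u - 1 - k') * (A + u) ≤ u * ((k:ℝ)+1) * (A - k') := by
      rw [hk1] at hA hA2 hAu ⊢
      nlinarith [mul_nonneg hlast (show (0:ℝ) ≤ (k':ℝ)+2-(A+u) by linarith),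
        mul_nonneg (show (0:ℝ) ≤ (k':ℝ)+2 by positivity)
          (mul_nonneg (sub_nonneg.2 h1) (show (0:ℝ) ≤ 1-(A-(k':ℝ)) by linarith))]
    rw [e2, Finset.prod_range_succ]
    calc (∏ j ∈ range k', (A + u - 1 - ↑j)) * (A + u - 1 - ↑k') * (A + u)
        ≤ (∏ j ∈ range k', (A - ↑j)) * (A + u - 1 - ↑k') * (A + u) := by
          apply mul_le_mul_of_nonneg_right (mul_le_mul_of_nonneg_right hmid hlast) hAu0
      _ = (∏ j ∈ range k', (A - ↑j)) * ((A + u - 1 - ↑k') * (A + u)) := by ring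
      _ ≤ (∏ j ∈ range k', (A - ↑j)) * (u * ((k:ℝ)+1) * (A - ↑k')) :=
          mul_le_mul_of_nonneg_left key hR0
      _ = u * ((k:ℝ)+1) * ((∏ j ∈ range k', (A - ↑j)) * (A - ↑k')) := by ring


lemma sss {ι : Type*} [DecidableEq ι] (s : Finset ι) (X : ι → ℝ)
    (hX0 : ∀ i, 0 ≤ X i) (hX1 : ∀ i, X i ≤ 1) :
    ∀ (k : ℕ) (a : ℝ), (k:ℝ) - 1 ≤ a → a ≤ ∑ i ∈ s, X i →
      (∏ j ∈ range k, (a - j)) ≤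
        (k.factorial : ℝ) * ∑ S ∈ s.powersetCard k, ∏ i ∈ S, X i := by
  induction s using Finset.induction_on with
  | empty =>
    intro k a hka has
    simp only [Finset.sum_empty] at has
    match k with
    | 0 => simp
    | 1 =>
      rw [show ((∅:Finset ι).powersetCard 1) = ∅ from
        Finset.powersetCard_eq_empty.2 (by simp)]
      simpa using has
    | (k+2) =>
      exfalso
      have h2 : (0:ℝ) ≤ (k:ℝ) := Nat.cast_nonneg k
      push_cast at hka
      linarith
  | @insert i₀ s hi₀ ih =>
    intro k a hka has
    match k with
    | 0 => simp
    | (k+1) =>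
      set u := X i₀ with hu
      have h0 : 0 ≤ u := hX0 i₀
      have h1 : u ≤ 1 := hX1 i₀
      set a' := a - u with ha'
      rw [Finset.sum_insert hi₀] at has
      have has' : a' ≤ ∑ i ∈ s, X i := by linarith
      have hcast : ((k:ℝ)+1) = ((k+1:ℕ):ℝ) := by push_cast; ring
      have hka' : (k:ℝ) - 1 ≤ a' := by push_cast at hka; linarith
      -- expansion of the symmetric sum
      have expand : ∑ S ∈ (insert i₀ s).powersetCard (k+1), ∏ i ∈ S, X i
          = (∑ S ∈ s.powersetCard (k+1), ∏ i ∈ S, X i)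
            + u * ∑ S ∈ s.powersetCard k, ∏ i ∈ S, X i := by
        rw [Finset.powersetCard_succ_insert hi₀, Finset.sum_union, Finset.sum_image]
        · rw [Finset.mul_sum]
          congr 1
          apply Finset.sum_congr rfl
          intro S hS
          rw [Finset.prod_insert]
          intro hmem
          exact hi₀ ((Finset.mem_powersetCard.1 hS).1 hmem)
        · intro S hS S' hS' hSS
          have hiS : i₀ ∉ S := fun h => hi₀ ((Finset.mem_powersetCard.1 hS).1 h)
          have hiS' : i₀ ∉ S' := fun h => hi₀ ((Finset.mem_powersetCard.1 hS').1 h)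
          rw [← Finset.erase_insert hiS, ← Finset.erase_insert hiS', hSS]
        · rw [Finset.disjoint_right]
          intro S hS hS2
          rw [Finset.mem_image] at hS
          obtain ⟨S', _, rfl⟩ := hS
          exact hi₀ ((Finset.mem_powersetCard.1 hS2).1 (Finset.mem_insert_self i₀ S'))
      set E1 := ∑ S ∈ s.powersetCard (k+1), ∏ i ∈ S, X i with hE1
      set E0 := ∑ S ∈ s.powersetCard k, ∏ i ∈ S, X i with hE0
      have hE1nn : 0 ≤ E1 := Finset.sum_nonneg fun S _ => Finset.prod_nonneg fun i _ => hX0 i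
      have e0bound := ih k a' hka' has'
      have prodeq : (∏ j ∈ range (k+1), (a - j)) = ∏ j ∈ range (k+1), (a' + u - j) := by
        apply Finset.prod_congr rfl; intro j _; rw [ha']; ring
      have factcast : ((k+1).factorial : ℝ) = ((k:ℝ)+1) * (k.factorial : ℝ) := by
        rw [Nat.factorial_succ]; push_cast; ring
      rw [expand, prodeq, factcast]
      by_cases hcase : (k:ℝ) ≤ a'
      · have e1bound := ih (k+1) a' (by push_cast; linarith) has'
        have hp := psi1 k a' u h0 h1 hcase
        have hmul : u * ((k:ℝ)+1) * (∏ j ∈ range k, (a' - j))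
            ≤ u * ((k:ℝ)+1) * ((k.factorial : ℝ) * E0) := by
          apply mul_le_mul_of_nonneg_left e0bound (by positivity)
        rw [factcast] at e1bound
        nlinarith [hp]
      · push_neg at hcase
        have hp := psi2 k a' u h0 h1 hka' hcase (by push_cast at hka; linarith)
        have hmul : u * ((k:ℝ)+1) * (∏ j ∈ range k, (a' - j))
            ≤ u * ((k:ℝ)+1) * ((k.factorial : ℝ) * E0) := by
          apply mul_le_mul_of_nonneg_left e0bound (by positivity)
        nlinarith [hp, mul_nonneg (mul_nonneg (show (0:ℝ) ≤ (k:ℝ)+1 by positivity) (Nat.cast_nonneg k.factorial)) hE1nn]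


lemma esymm_le {ι : Type*} [DecidableEq ι] (s : Finset ι) (μ : ι → ℝ)
    (hμ : ∀ i, 0 ≤ μ i) :
    ∀ k : ℕ, (k.factorial : ℝ) * ∑ S ∈ s.powersetCard k, ∏ i ∈ S, μ i ≤ (∑ i ∈ s, μ i)^k := by
  intro k
  induction k with
  | zero => simp
  | succ k ih =>
    have hM : 0 ≤ ∑ i ∈ s, μ i := Finset.sum_nonneg fun i _ => hμ i
    have key : ((k:ℝ)+1) * ∑ S ∈ s.powersetCard (k+1), ∏ i ∈ S, μ i
        ≤ (∑ S ∈ s.powersetCard k, ∏ i ∈ S, μ i) * (∑ i ∈ s, μ i) := by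
      have step1 : ((k:ℝ)+1) * ∑ S ∈ s.powersetCard (k+1), ∏ i ∈ S, μ i
          = ∑ S ∈ s.powersetCard (k+1), ∑ i ∈ S, (μ i * ∏ j ∈ S.erase i, μ j) := by
        rw [Finset.mul_sum]
        apply Finset.sum_congr rfl
        intro S hS
        have hcard : S.card = k + 1 := (Finset.mem_powersetCard.1 hS).2
        rw [Finset.sum_congr rfl (fun i hi => Finset.mul_prod_erase S μ hi)]
        rw [Finset.sum_const, hcard]
        push_cast; ring
      rw [step1, Finset.sum_sigma']
      have step2 : ∑ p ∈ (s.powersetCard (k+1)).sigma (fun S => S),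
            (μ p.2 * ∏ j ∈ p.1.erase p.2, μ j)
          = ∑ p ∈ (s.powersetCard k).sigma (fun S => s \ S), (μ p.2 * ∏ j ∈ p.1, μ j) := by
        apply Finset.sum_nbij' (i := fun p => (⟨p.1.erase p.2, p.2⟩ : (_ : Finset ι) × ι))
          (j := fun p => (⟨insert p.2 p.1, p.2⟩ : (_ : Finset ι) × ι))
        · intro p hp
          rw [Finset.mem_sigma] at hp ⊢
          obtain ⟨hp1, hp2⟩ := hp
          rw [Finset.mem_powersetCard] at hp1 ⊢
          refine ⟨⟨(Finset.erase_subset _ _).trans hp1.1, ?_⟩, ?_⟩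
          · rw [Finset.card_erase_of_mem hp2, hp1.2]; omega
          · rw [Finset.mem_sdiff]
            exact ⟨hp1.1 hp2, Finset.notMem_erase _ _⟩
        · intro p hp
          rw [Finset.mem_sigma] at hp ⊢
          obtain ⟨hp1, hp2⟩ := hp
          rw [Finset.mem_powersetCard] at hp1 ⊢
          rw [Finset.mem_sdiff] at hp2
          refine ⟨⟨?_, ?_⟩, Finset.mem_insert_self _ _⟩
          · exact Finset.insert_subset hp2.1 hp1.1
          · rw [Finset.card_insert_of_notMem hp2.2, hp1.2]
        · rintro ⟨S', i⟩ hp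
          rw [Finset.mem_sigma] at hp
          exact congrArg (fun S => (⟨S, i⟩ : (_ : Finset ι) × ι)) (Finset.insert_erase hp.2)
        · rintro ⟨S, i⟩ hp
          rw [Finset.mem_sigma] at hp
          exact congrArg (fun S => (⟨S, i⟩ : (_ : Finset ι) × ι))
            (Finset.erase_insert (Finset.mem_sdiff.1 hp.2).2)
        · intro p hp; rfl
      rw [step2, Finset.sum_sigma]
      calc ∑ S ∈ s.powersetCard k, ∑ i ∈ s \ S, (μ i * ∏ j ∈ S, μ j)
          ≤ ∑ S ∈ s.powersetCard k, ∑ i ∈ s, (μ i * ∏ j ∈ S, μ j) := by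
            apply Finset.sum_le_sum
            intro S _
            apply Finset.sum_le_sum_of_subset_of_nonneg (Finset.sdiff_subset)
            intro i _ _
            exact mul_nonneg (hμ i) (Finset.prod_nonneg fun j _ => hμ j)
        _ = (∑ S ∈ s.powersetCard k, ∏ i ∈ S, μ i) * (∑ i ∈ s, μ i) := by
            rw [Finset.sum_mul]
            apply Finset.sum_congr rfl
            intro S _
            rw [← Finset.sum_mul, mul_comm]
    have hfc : ((k+1).factorial : ℝ) = (k.factorial : ℝ) * ((k:ℝ)+1) := by
      rw [Nat.factorial_succ]; push_cast; ring
    rw [hfc, pow_succ]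
    calc (k.factorial : ℝ) * ((k:ℝ)+1) * ∑ S ∈ s.powersetCard (k+1), ∏ i ∈ S, μ i
        = (k.factorial : ℝ) * (((k:ℝ)+1) * ∑ S ∈ s.powersetCard (k+1), ∏ i ∈ S, μ i) := by ring
      _ ≤ (k.factorial : ℝ) * ((∑ S ∈ s.powersetCard k, ∏ i ∈ S, μ i) * (∑ i ∈ s, μ i)) := by
          apply mul_le_mul_of_nonneg_left key (Nat.cast_nonneg _)
      _ = ((k.factorial : ℝ) * ∑ S ∈ s.powersetCard k, ∏ i ∈ S, μ i) * (∑ i ∈ s, μ i) := by ring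
      _ ≤ (∑ i ∈ s, μ i)^k * (∑ i ∈ s, μ i) := by
          apply mul_le_mul_of_nonneg_right ih hM


lemma log_ratio_le (c : ℝ) (hc : 0 < c) : c * (Real.log (c+1) - Real.log c) ≤ 1 := by
  have h1 : Real.log ((c+1)/c) ≤ (c+1)/c - 1 :=
    Real.log_le_sub_one_of_pos (by positivity)
  rw [Real.log_div (by positivity) (ne_of_gt hc)] at h1
  have h2 : (c+1)/c - 1 = 1/c := by field_simp; ring
  rw [h2] at h1
  calc c * (Real.log (c+1) - Real.log c) ≤ c * (1/c) := by
        apply mul_le_mul_of_nonneg_left h1 (le_of_lt hc)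
    _ = 1 := by field_simp

lemma log_telescope (y : ℝ) (hy : 0 < y) :
    ∀ k : ℕ, (y + k) * Real.log (y + k) - y * Real.log y - k
      ≤ ∑ j ∈ range k, Real.log (y + (j+1)) := by
  intro k
  induction k with
  | zero => simp
  | succ k ih =>
    rw [Finset.sum_range_succ]
    have hc : (0:ℝ) < y + k := by positivity
    have key := log_ratio_le (y + k) hc
    have hre : y + ((k:ℝ)+1) = (y + k) + 1 := by ring
    push_cast
    rw [hre]
    push_cast at ih
    nlinarith [key]
lemma chernoffG_eq (y δ : ℝ) (hδ : 0 < δ) :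
    chernoffG y δ = Real.exp ((δ - (1+δ) * Real.log (1+δ)) * y) := by
  unfold chernoffG
  have h1 : (0:ℝ) < 1 + δ := by linarith
  have h2 : (1+δ) ^ (1+δ) = Real.exp ((1+δ) * Real.log (1+δ)) := by
    rw [Real.rpow_def_of_pos h1]; ring_nf
  rw [h2, ← Real.exp_sub, Real.rpow_def_of_pos (Real.exp_pos _), Real.log_exp]

lemma chernoffG_pos (y δ : ℝ) (hδ : 0 < δ) : 0 < chernoffG y δ := by
  rw [chernoffG_eq y δ hδ]; exact Real.exp_pos _

lemma chern_bound (k : ℕ) (hk : 0 < k) (y b : ℝ) (hb : 0 < b) (hby : b ≤ y) :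
    b ^ k ≤ chernoffG y ((k:ℝ)/y) * ∏ j ∈ range k, (b + k - j) := by
  have hy : 0 < y := lt_of_lt_of_le hb hby
  have hδ : 0 < (k:ℝ)/y := by positivity
  set δ := (k:ℝ)/y with hδdef
  have h1δ : 1 + δ = (y + k)/y := by rw [hδdef]; field_simp; try ring
  -- rewrite the product
  have hprod : (∏ j ∈ range k, (b + k - j)) = ∏ j ∈ range k, (b + (j+1)) := by
    rw [← Finset.prod_range_reflect]
    apply Finset.prod_congr rfl
    intro j hj
    simp only [Finset.mem_range] at hj
    have : ((k - 1 - j : ℕ) : ℝ) = (k:ℝ) - 1 - j := by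
      have h1 : j + 1 ≤ k := hj
      have h2 : j ≤ k - 1 := by omega
      push_cast [Nat.cast_sub h2, Nat.cast_sub (by omega : 1 ≤ k)]
      ring
    rw [this]; ring
  have hprodpos : ∀ j ∈ range k, (0:ℝ) < b + (j+1) := by
    intro j _; positivity
  have hGpos := chernoffG_pos y δ hδ
  have hP : (0:ℝ) < ∏ j ∈ range k, (b + (j+1)) := Finset.prod_pos hprodpos
  rw [hprod]
  -- log comparison
  rw [chernoffG_eq y δ hδ]
  have hexp : (δ - (1+δ) * Real.log (1+δ)) * y
      = (k:ℝ) - (y + k) * (Real.log (y+k) - Real.log y) := by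
    rw [h1δ, Real.log_div (by positivity) (ne_of_gt hy), hδdef]
    field_simp
    try ring
  rw [hexp]
  -- pointwise comparison of log increments
  have hterm : ∀ j ∈ range k, Real.log (y + (j+1)) - Real.log y
      ≤ Real.log (b + (j+1)) - Real.log b := by
    intro j _
    have e1 : Real.log (y + (j+1)) - Real.log y = Real.log ((y + (j+1))/y) := by
      rw [Real.log_div (by positivity) (ne_of_gt hy)]
    have e2 : Real.log (b + (j+1)) - Real.log b = Real.log ((b + (j+1))/b) := by
      rw [Real.log_div (by positivity) (ne_of_gt hb)]
    rw [e1, e2]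
    apply Real.log_le_log (by positivity)
    rw [div_le_div_iff₀ hy hb]
    nlinarith [hby, hb]
  have htel := log_telescope y hy k
  have hsum : ∑ j ∈ range k, Real.log (y + (j+1)) - (k:ℝ) * Real.log y
      ≤ ∑ j ∈ range k, Real.log (b + (j+1)) - (k:ℝ) * Real.log b := by
    have := Finset.sum_le_sum hterm
    rw [Finset.sum_sub_distrib, Finset.sum_sub_distrib] at this
    simp only [Finset.sum_const, Finset.card_range, nsmul_eq_mul] at this
    linarith
  -- conclude via exp
  have hlogs : (k:ℝ) * Real.log b
      ≤ ((k:ℝ) - (y + k) * (Real.log (y+k) - Real.log y)) + ∑ j ∈ range k, Real.log (b + (j+1)) := by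
    nlinarith [htel, hsum]
  calc b ^ k = Real.exp ((k:ℝ) * Real.log b) := by
        rw [← Real.log_pow, Real.exp_log (by positivity)]
    _ ≤ Real.exp (((k:ℝ) - (y + k) * (Real.log (y+k) - Real.log y))
          + ∑ j ∈ range k, Real.log (b + (j+1))) := Real.exp_le_exp.2 hlogs
    _ = Real.exp ((k:ℝ) - (y + k) * (Real.log (y+k) - Real.log y))
          * ∏ j ∈ range k, (b + (j+1)) := by
        rw [Real.exp_add]
        congr 1
        rw [Real.exp_sum]
        apply Finset.prod_congr rfl
        intro j hj
        rw [Real.exp_log (hprodpos j hj)]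

lemma qkey (k t : ℕ) (hk : 0 < k) (ht : 1 ≤ t) (G : ℝ) (hG0 : 0 < G)
    (hG : G ≤ 1 / (Real.exp 1 * k * t)) :
    ∃ q : ℝ, 0 < q ∧ q < 1 ∧ G ≤ q * (1-q)^(k*(t-1)) := by
  have he : (2:ℝ) < Real.exp 1 := by
    have := Real.exp_one_gt_d9; linarith
  rcases eq_or_lt_of_le ht with h1 | h2
  · -- t = 1
    refine ⟨1/2, by norm_num, by norm_num, ?_⟩
    have ht1 : t = 1 := h1.symm
    subst ht1
    simp only [Nat.sub_self, Nat.mul_zero, pow_zero, mul_one]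
    have hk1 : (1:ℝ) ≤ (k:ℝ) := by exact_mod_cast hk
    have hG' : G ≤ 1 / (Real.exp 1 * k * 1) := by exact_mod_cast hG
    calc G ≤ 1 / (Real.exp 1 * k * 1) := hG'
      _ ≤ 1 / 2 := by
          apply div_le_div_of_nonneg_left (by norm_num) (by norm_num)
          nlinarith
  · -- t ≥ 2
    set K := k * (t - 1) with hK
    have hK1 : 1 ≤ K := by
      have : 1 ≤ t - 1 := by omega
      calc 1 = 1 * 1 := by ring
        _ ≤ k * (t-1) := Nat.mul_le_mul hk this
    have hKpos : (0:ℝ) < K := by exact_mod_cast hK1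
    refine ⟨1/((K:ℝ)+1), by positivity, ?_, ?_⟩
    · rw [div_lt_one (by positivity)]; linarith
    · have h1q : (1:ℝ) - 1/((K:ℝ)+1) = K/((K:ℝ)+1) := by field_simp; ring
      rw [h1q, div_pow, div_mul_div_comm, one_mul]
      -- goal : G ≤ K^K / ((K+1)*(K+1)^K)
      have hKt : (K:ℝ) + 1 ≤ (k:ℝ) * t := by
        have : K + 1 ≤ k * t := by
          calc K + 1 ≤ K + k := by omega
            _ = k * (t-1) + k := rfl
            _ = k * t := by
                have : t - 1 + 1 = t := by omega
                rw [← Nat.mul_succ]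
                rw [Nat.succ_eq_add_one, this]
        exact_mod_cast this
      have hexp : ((K:ℝ)+1)^K ≤ Real.exp 1 * (K:ℝ)^K := by
        have h1 : ((K:ℝ)+1) ≤ (K:ℝ) * Real.exp (1/(K:ℝ)) := by
          have := Real.add_one_le_exp (1/(K:ℝ))
          calc (K:ℝ)+1 = (K:ℝ)*(1 + 1/(K:ℝ)) := by field_simp; try ring
            _ ≤ (K:ℝ) * Real.exp (1/(K:ℝ)) := by
                apply mul_le_mul_of_nonneg_left ?_ (le_of_lt hKpos)
                calc 1 + 1/(K:ℝ) = 1/(K:ℝ) + 1 := by ring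
                  _ ≤ Real.exp (1/(K:ℝ)) := Real.add_one_le_exp _
        calc ((K:ℝ)+1)^K ≤ ((K:ℝ) * Real.exp (1/(K:ℝ)))^K := by
              apply pow_le_pow_left₀ (by positivity) h1
          _ = (K:ℝ)^K * Real.exp (1/(K:ℝ))^K := mul_pow _ _ _
          _ = (K:ℝ)^K * Real.exp ((K:ℝ) * (1/(K:ℝ))) := by
              rw [← Real.exp_nat_mul]
              try norm_num
          _ = Real.exp 1 * (K:ℝ)^K := by
              rw [mul_one_div, div_self (ne_of_gt hKpos)]
              ring
      have hcross : ((K:ℝ)+1) * ((K:ℝ)+1)^K ≤ (Real.exp 1 * k * t) * (K:ℝ)^K := by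
        calc ((K:ℝ)+1) * ((K:ℝ)+1)^K ≤ ((k:ℝ)*t) * (Real.exp 1 * (K:ℝ)^K) := by
              apply mul_le_mul hKt hexp (by positivity) (by positivity)
          _ = (Real.exp 1 * k * t) * (K:ℝ)^K := by ring
      have hpos1 : (0:ℝ) < Real.exp 1 * k * t := by
        have hk1 : (0:ℝ) < (k:ℝ) := by exact_mod_cast hk
        have ht1 : (0:ℝ) < (t:ℝ) := by exact_mod_cast lt_of_lt_of_le one_pos ht
        positivity
      calc G ≤ 1/(Real.exp 1 * k * t) := hG
        _ ≤ (K:ℝ)^K / (((K:ℝ)+1) * ((K:ℝ)+1)^K) := by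
            rw [div_le_div_iff₀ hpos1 (by positivity)]
            linarith


section OneStep
variable {n : ℕ} {ℓ : Fin n → ℕ}

lemma one_step (x : (Σ i : Fin n, Fin (ℓ i)) → ℝ)
    (hblock : ∀ i : Fin n, ∑ j : Fin (ℓ i), x ⟨i, j⟩ = 1)
    (i₀ : Fin n) (φ : Fin (ℓ i₀) → ℝ) (g : (∀ i : Fin n, Fin (ℓ i)) → ℝ)
    (hg : ∀ (ω : ∀ i : Fin n, Fin (ℓ i)) (j : Fin (ℓ i₀)),
      g (Function.update ω i₀ j) = g ω) :
    ∑ ω : ∀ i : Fin n, Fin (ℓ i), (∏ i, x ⟨i, ω i⟩) * (φ (ω i₀) * g ω)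
      = (∑ j, x ⟨i₀, j⟩ * φ j) * ∑ ω : ∀ i : Fin n, Fin (ℓ i), (∏ i, x ⟨i, ω i⟩) * g ω := by
  classical
  set e := Equiv.piSplitAt i₀ (fun i => Fin (ℓ i)) with he
  have hsymm_at : ∀ (j : Fin (ℓ i₀)) (f : ∀ i' : {i // i ≠ i₀}, Fin (ℓ i')),
      e.symm (j, f) i₀ = j := by
    intro j f
    simp [he, Equiv.piSplitAt]
  have hsymm_ne : ∀ (j : Fin (ℓ i₀)) (f : ∀ i' : {i // i ≠ i₀}, Fin (ℓ i'))
      (i : Fin n) (hi : i ≠ i₀), e.symm (j, f) i = f ⟨i, hi⟩ := by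
    intro j f i hi
    simp [he, Equiv.piSplitAt, dif_neg hi]
  have hupdate : ∀ (j j' : Fin (ℓ i₀)) (f : ∀ i' : {i // i ≠ i₀}, Fin (ℓ i')),
      e.symm (j, f) = Function.update (e.symm (j', f)) i₀ j := by
    intro j j' f
    funext i
    by_cases hi : i = i₀
    · subst hi
      rw [Function.update_self, hsymm_at]
    · rw [Function.update_of_ne hi, hsymm_ne _ _ _ hi, hsymm_ne _ _ _ hi]
  have hgconst : ∀ (j j' : Fin (ℓ i₀)) (f : ∀ i' : {i // i ≠ i₀}, Fin (ℓ i')),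
      g (e.symm (j, f)) = g (e.symm (j', f)) := by
    intro j j' f
    rw [hupdate j j' f, hg]
  -- weight factorization
  have hw : ∀ (j : Fin (ℓ i₀)) (f : ∀ i' : {i // i ≠ i₀}, Fin (ℓ i')),
      (∏ i, x ⟨i, e.symm (j, f) i⟩)
        = x ⟨i₀, j⟩ * ∏ i' : {i // i ≠ i₀}, x ⟨i', f i'⟩ := by
    intro j f
    rw [Fintype.prod_eq_mul_prod_compl i₀]
    congr 1
    · rw [hsymm_at]
    · rw [Finset.prod_subtype ({i₀}ᶜ : Finset (Fin n))
        (p := fun i => i ≠ i₀) (by intro i; simp)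
        (fun i => x ⟨i, e.symm (j, f) i⟩)]
      apply Finset.prod_congr rfl
      intro i' _
      rw [hsymm_ne j f i'.1 i'.2]
  set P : (∀ i' : {i // i ≠ i₀}, Fin (ℓ i'.1)) → ℝ :=
    fun f => ∏ i' : {i // i ≠ i₀}, x ⟨i'.1, f i'⟩ with hPdef
  have main : ∀ h : (∀ i : Fin n, Fin (ℓ i)) → ℝ,
      ∑ ω : ∀ i : Fin n, Fin (ℓ i), (∏ i, x ⟨i, ω i⟩) * h ω
        = ∑ j, ∑ f, (x ⟨i₀, j⟩ * P f) * h (e.symm (j, f)) := by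
    intro h
    rw [← Equiv.sum_comp e.symm (fun ω => (∏ i, x ⟨i, ω i⟩) * h ω), Fintype.sum_prod_type]
    apply Finset.sum_congr rfl
    intro j _
    apply Finset.sum_congr rfl
    intro f _
    rw [hw]
  rcases isEmpty_or_nonempty (Fin (ℓ i₀)) with hempty | hne
  · rw [main (fun ω => φ (ω i₀) * g ω)]
    simp
  · obtain ⟨j₀⟩ := hne
    set c : ℝ := ∑ f, P f * g (e.symm (j₀, f)) with hcdef
    have lhs_eq : ∑ ω : ∀ i : Fin n, Fin (ℓ i), (∏ i, x ⟨i, ω i⟩) * (φ (ω i₀) * g ω)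
        = (∑ j, x ⟨i₀, j⟩ * φ j) * c := by
      rw [main (fun ω => φ (ω i₀) * g ω)]
      have hterm : ∀ (j : Fin (ℓ i₀)) f,
          (x ⟨i₀, j⟩ * P f) * (φ (e.symm (j, f) i₀) * g (e.symm (j, f)))
          = (x ⟨i₀, j⟩ * φ j) * (P f * g (e.symm (j₀, f))) := by
        intro j f
        rw [hsymm_at, hgconst j j₀]
        ring
      have hrow : ∀ j : Fin (ℓ i₀),
          (∑ f, (x ⟨i₀, j⟩ * P f) * (φ (e.symm (j, f) i₀) * g (e.symm (j, f))))
            = (x ⟨i₀, j⟩ * φ j) * c := by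
        intro j
        rw [Finset.sum_congr rfl (fun f _ => hterm j f), ← Finset.mul_sum]
      rw [Finset.sum_congr rfl (fun j _ => hrow j), ← Finset.sum_mul]
    have rhs_eq : ∑ ω : ∀ i : Fin n, Fin (ℓ i), (∏ i, x ⟨i, ω i⟩) * g ω = c := by
      rw [main g]
      have hterm : ∀ (j : Fin (ℓ i₀)) (f), (x ⟨i₀, j⟩ * P f) * g (e.symm (j, f))
          = x ⟨i₀, j⟩ * (P f * g (e.symm (j₀, f))) := by
        intro j f
        rw [hgconst j j₀]
        ring
      have hrow : ∀ j : Fin (ℓ i₀),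
          (∑ f, (x ⟨i₀, j⟩ * P f) * g (e.symm (j, f))) = x ⟨i₀, j⟩ * c := by
        intro j
        rw [Finset.sum_congr rfl (fun f _ => hterm j f), ← Finset.mul_sum]
      rw [Finset.sum_congr rfl (fun j _ => hrow j), ← Finset.sum_mul, hblock i₀, one_mul]
    rw [lhs_eq, rhs_eq]

lemma fact_step (x : (Σ i : Fin n, Fin (ℓ i)) → ℝ)
    (hblock : ∀ i : Fin n, ∑ j : Fin (ℓ i), x ⟨i, j⟩ = 1)
    (S : Finset (Fin n)) (F : ∀ i : Fin n, Fin (ℓ i) → ℝ)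
    (g : (∀ i : Fin n, Fin (ℓ i)) → ℝ)
    (hgS : ∀ ω ω' : ∀ i : Fin n, Fin (ℓ i), (∀ i ∉ S, ω i = ω' i) → g ω = g ω') :
    ∑ ω : ∀ i : Fin n, Fin (ℓ i), (∏ i, x ⟨i, ω i⟩) * ((∏ i ∈ S, F i (ω i)) * g ω)
      = (∏ i ∈ S, ∑ j, x ⟨i, j⟩ * F i j)
          * ∑ ω : ∀ i : Fin n, Fin (ℓ i), (∏ i, x ⟨i, ω i⟩) * g ω := by
  classical
  induction S using Finset.induction_on generalizing g with
  | empty => simp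
  | @insert i₀ S hi₀ ih =>
    have hstep1 : ∑ ω : ∀ i : Fin n, Fin (ℓ i),
          (∏ i, x ⟨i, ω i⟩) * ((∏ i ∈ insert i₀ S, F i (ω i)) * g ω)
        = ∑ ω : ∀ i : Fin n, Fin (ℓ i),
          (∏ i, x ⟨i, ω i⟩) * (F i₀ (ω i₀) * ((∏ i ∈ S, F i (ω i)) * g ω)) := by
      apply Finset.sum_congr rfl
      intro ω _
      rw [Finset.prod_insert hi₀]
      ring
    rw [hstep1]
    rw [one_step x hblock i₀ (F i₀) (fun ω => (∏ i ∈ S, F i (ω i)) * g ω) ?_]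
    · rw [ih g ?_]
      · rw [Finset.prod_insert hi₀]
        ring
      · intro ω ω' hagree
        apply hgS
        intro i hi
        exact hagree i (fun hiS => hi (Finset.mem_insert_of_mem hiS))
    · intro ω j
      congr 1
      · apply Finset.prod_congr rfl
        intro i hiS
        have : i ≠ i₀ := fun h => hi₀ (h ▸ hiS)
        rw [Function.update_of_ne this]
      · apply hgS
        intro i hi
        have : i ≠ i₀ := fun h => hi (h ▸ Finset.mem_insert_self i₀ S)
        rw [Function.update_of_ne this]

end OneStep


section MIP

variable {n m : ℕ} {ℓ : Fin n → ℕ}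

noncomputable def mipW (x : (Σ i : Fin n, Fin (ℓ i)) → ℝ)
    (ω : ∀ i : Fin n, Fin (ℓ i)) : ℝ := ∏ i, x ⟨i, ω i⟩

noncomputable def mipRow (A : Fin m → (Σ i : Fin n, Fin (ℓ i)) → ℝ) (r : Fin m)
    (ω : ∀ i : Fin n, Fin (ℓ i)) : ℝ := ∑ i, A r ⟨i, ω i⟩

noncomputable def mipGood (A : Fin m → (Σ i : Fin n, Fin (ℓ i)) → ℝ) (b : Fin m → ℝ)
    (k : ℕ) (T : Finset (Fin m)) : Finset (∀ i : Fin n, Fin (ℓ i)) :=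
  univ.filter (fun ω => ∀ r ∈ T, mipRow A r ω ≤ b r + k)

noncomputable def mipPr (x : (Σ i : Fin n, Fin (ℓ i)) → ℝ)
    (A : Fin m → (Σ i : Fin n, Fin (ℓ i)) → ℝ) (b : Fin m → ℝ) (k : ℕ)
    (T : Finset (Fin m)) : ℝ :=
  ∑ ω ∈ mipGood A b k T, mipW x ω

noncomputable def mipBad (x : (Σ i : Fin n, Fin (ℓ i)) → ℝ)
    (A : Fin m → (Σ i : Fin n, Fin (ℓ i)) → ℝ) (b : Fin m → ℝ) (k : ℕ)
    (r : Fin m) (T : Finset (Fin m)) : ℝ :=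
  ∑ ω ∈ (mipGood A b k T).filter (fun ω => ¬ mipRow A r ω ≤ b r + k), mipW x ω

variable (x : (Σ i : Fin n, Fin (ℓ i)) → ℝ) (A : Fin m → (Σ i : Fin n, Fin (ℓ i)) → ℝ)
  (b : Fin m → ℝ) (k : ℕ)

lemma mipW_nonneg (hx0 : ∀ j, 0 ≤ x j) (ω : ∀ i : Fin n, Fin (ℓ i)) : 0 ≤ mipW x ω :=
  Finset.prod_nonneg fun i _ => hx0 _

lemma mipPr_nonneg (hx0 : ∀ j, 0 ≤ x j) (T : Finset (Fin m)) : 0 ≤ mipPr x A b k T :=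
  Finset.sum_nonneg fun ω _ => mipW_nonneg x hx0 ω

lemma mipGood_mono {T W : Finset (Fin m)} (h : W ⊆ T) :
    mipGood A b k T ⊆ mipGood A b k W := by
  intro ω hω
  rw [mipGood, Finset.mem_filter] at hω ⊢
  exact ⟨hω.1, fun r hr => hω.2 r (h hr)⟩

lemma mipPr_split (r : Fin m) (T : Finset (Fin m)) (hr : r ∉ T) :
    mipPr x A b k T = mipPr x A b k (insert r T) + mipBad x A b k r T := by
  have hgood : mipGood A b k (insert r T)
      = (mipGood A b k T).filter (fun ω => mipRow A r ω ≤ b r + k) := by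
    ext ω
    simp only [mipGood, Finset.mem_filter, Finset.mem_univ, true_and,
      Finset.mem_insert]
    constructor
    · intro h
      exact ⟨fun r' hr' => h r' (Or.inr hr'), h r (Or.inl rfl)⟩
    · rintro ⟨h1, h2⟩ r' (rfl | hr')
      · exact h2
      · exact h1 r' hr'
  rw [mipPr, mipPr, mipBad, hgood]
  exact (Finset.sum_filter_add_sum_filter_not _ _ _).symm

lemma mipChain (q : ℝ) (hq1 : q ≤ 1) (hx0 : ∀ j, 0 ≤ x j) (T : Finset (Fin m)) 
    (H : ∀ U r', U ⊂ T → r' ∉ U → mipBad x A b k r' U ≤ q * mipPr x A b k U) :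
    ∀ (d : ℕ) (W : Finset (Fin m)), W ⊆ T → T.card - W.card = d →
      (1-q)^d * mipPr x A b k W ≤ mipPr x A b k T := by
  intro d
  induction d with
  | zero =>
    intro W hWT hcard
    have hle : T.card ≤ W.card := by omega
    have : W = T := Finset.eq_of_subset_of_card_le hWT hle
    subst this
    simp
  | succ d ih =>
    intro W hWT hcard
    have hne : W ≠ T := by
      intro h; subst h; omega
    have hssub : W ⊂ T := Finset.ssubset_iff_subset_ne.2 ⟨hWT, hne⟩
    obtain ⟨r', hr'T, hr'W⟩ := Finset.exists_of_ssubset hssub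
    have hW' : insert r' W ⊆ T := Finset.insert_subset hr'T hWT
    have hcard' : T.card - (insert r' W).card = d := by
      rw [Finset.card_insert_of_notMem hr'W]
      have := Finset.card_le_card hWT
      omega
    have hbadW := H W r' hssub hr'W
    have hsplit := mipPr_split x A b k r' W hr'W
    have hPrW := mipPr_nonneg x A b k hx0 W
    have hstep : (1-q) * mipPr x A b k W ≤ mipPr x A b k (insert r' W) := by
      nlinarith [hbadW, hsplit]
    calc (1-q)^(d+1) * mipPr x A b k W
        = (1-q)^d * ((1-q) * mipPr x A b k W) := by ring
      _ ≤ (1-q)^d * mipPr x A b k (insert r' W) := by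
          have h01 : (0:ℝ) ≤ 1-q := by linarith
          exact mul_le_mul_of_nonneg_left hstep (by positivity)
      _ ≤ mipPr x A b k T := ih (insert r' W) hW' hcard'



lemma mipStep
    (hA : ∀ r j, A r j ∈ Set.Icc (0:ℝ) 1)
    (hx : ∀ j, x j ∈ Set.Icc (0:ℝ) 1)
    (hblock : ∀ i : Fin n, ∑ j : Fin (ℓ i), x ⟨i, j⟩ = 1)
    (hb : ∀ r, b r = ∑ j, A r j * x j)
    (hbpos : ∀ r, 0 < b r)
    (hk : 0 < k)
    (t : ℕ) (q : ℝ) (hq0 : 0 < q) (hq1 : q < 1)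
    (hrows : ∀ i : Fin n, (univ.filter fun r' : Fin m => ∃ j, A r' ⟨i, j⟩ ≠ 0).card ≤ t)
    (hkey : ∀ r, b r ^ k ≤ (q * (1-q)^(k*(t-1))) * ∏ j ∈ range k, (b r + k - (j:ℝ)))
    (T : Finset (Fin m)) (H : ∀ U r', U ⊂ T → r' ∉ U → mipBad x A b k r' U ≤ q * mipPr x A b k U)
    (r : Fin m) (hr : r ∉ T) :
    mipBad x A b k r T ≤ q * mipPr x A b k T := by
  have hx0 : ∀ j, 0 ≤ x j := fun j => (hx j).1
  have hx1 : ∀ j, x j ≤ 1 := fun j => (hx j).2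
  have hA0 : ∀ r' j, 0 ≤ A r' j := fun r' j => (hA r' j).1
  have hA1 : ∀ r' j, A r' j ≤ 1 := fun r' j => (hA r' j).2
  have hPrT : 0 ≤ mipPr x A b k T := mipPr_nonneg x A b k hx0 T
  set K := k * (t-1) with hK
  have h1q0 : (0:ℝ) < 1 - q := by linarith
  set Crow := ∏ j ∈ range k, (b r + k - (j:ℝ)) with hCrow
  have hCrowPos : 0 < Crow := by
    apply Finset.prod_pos
    intro j hj
    rw [Finset.mem_range] at hj
    have : (j:ℝ) + 1 ≤ (k:ℝ) := by exact_mod_cast hj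
    have := hbpos r
    linarith
  set esym : (∀ i : Fin n, Fin (ℓ i)) → ℝ :=
    fun ω => ∑ S ∈ (univ : Finset (Fin n)).powersetCard k, ∏ i ∈ S, A r ⟨i, ω i⟩
    with hesym
  have hesym0 : ∀ ω, 0 ≤ esym ω := fun ω =>
    Finset.sum_nonneg fun S _ => Finset.prod_nonneg fun i _ => hA0 r _
  -- Step (a): pointwise SSS bound
  have step_a : mipBad x A b k r T * Crow
      ≤ (k.factorial : ℝ) * ∑ ω ∈ mipGood A b k T, mipW x ω * esym ω := by
    rw [mipBad, Finset.sum_mul]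
    have h1 : ∀ ω ∈ (mipGood A b k T).filter (fun ω => ¬ mipRow A r ω ≤ b r + k),
        mipW x ω * Crow ≤ mipW x ω * ((k.factorial : ℝ) * esym ω) := by
      intro ω hω
      rw [Finset.mem_filter] at hω
      have hviol : b r + k < mipRow A r ω := lt_of_not_ge hω.2
      have hsss := sss (univ : Finset (Fin n)) (fun i => A r ⟨i, ω i⟩)
        (fun i => hA0 r _) (fun i => hA1 r _) k (b r + k)
        (by have := hbpos r; linarith)
        (le_of_lt hviol)
      apply mul_le_mul_of_nonneg_left _ (mipW_nonneg x hx0 ω)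
      exact hsss
    calc ∑ ω ∈ (mipGood A b k T).filter (fun ω => ¬ mipRow A r ω ≤ b r + k),
          mipW x ω * Crow
        ≤ ∑ ω ∈ (mipGood A b k T).filter (fun ω => ¬ mipRow A r ω ≤ b r + k),
          mipW x ω * ((k.factorial : ℝ) * esym ω) := Finset.sum_le_sum h1
      _ ≤ ∑ ω ∈ mipGood A b k T, mipW x ω * ((k.factorial : ℝ) * esym ω) := by
          apply Finset.sum_le_sum_of_subset_of_nonneg (Finset.filter_subset _ _)
          intro ω _ _
          have := mipW_nonneg x hx0 ω
          have := hesym0 ω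
          positivity
      _ = (k.factorial : ℝ) * ∑ ω ∈ mipGood A b k T, mipW x ω * esym ω := by
          rw [Finset.mul_sum]
          apply Finset.sum_congr rfl
          intro ω _
          ring
  -- Step (b): exchange sums
  have step_b : ∑ ω ∈ mipGood A b k T, mipW x ω * esym ω
      = ∑ S ∈ (univ : Finset (Fin n)).powersetCard k,
          ∑ ω ∈ mipGood A b k T, mipW x ω * ∏ i ∈ S, A r ⟨i, ω i⟩ := by
    rw [Finset.sum_comm]
    apply Finset.sum_congr rfl
    intro ω _
    rw [hesym, Finset.mul_sum]
  -- the means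
  set μ : Fin n → ℝ := fun i => ∑ j, x ⟨i, j⟩ * A r ⟨i, j⟩ with hμ
  have hμ0 : ∀ i, 0 ≤ μ i := fun i =>
    Finset.sum_nonneg fun j _ => mul_nonneg (hx0 _) (hA0 r _)
  have hμsum : ∑ i, μ i = b r := by
    rw [hb r, ← Finset.univ_sigma_univ, Finset.sum_sigma]
    apply Finset.sum_congr rfl
    intro i _
    apply Finset.sum_congr rfl
    intro j _
    ring
  -- Step (c): per-certificate bound
  have step_c : ∀ S ∈ (univ : Finset (Fin n)).powersetCard k,
      (1-q)^K * ∑ ω ∈ mipGood A b k T, mipW x ω * ∏ i ∈ S, A r ⟨i, ω i⟩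
        ≤ (∏ i ∈ S, μ i) * mipPr x A b k T := by
    intro S hS
    have hcardS : S.card = k := (Finset.mem_powersetCard.1 hS).2
    have hμSnn : 0 ≤ ∏ i ∈ S, μ i := Finset.prod_nonneg fun i _ => hμ0 i
    by_cases hsupp : ∀ i ∈ S, ∃ j, A r ⟨i, j⟩ ≠ 0
    · -- main case
      set D := T.filter (fun r' => ∃ i ∈ S, ∃ j : Fin (ℓ i), A r' ⟨i, j⟩ ≠ 0) with hD
      have hDsub : D ⊆ T := Finset.filter_subset _ _
      have hDcard : D.card ≤ K := by
        have hsub : D ⊆ S.biUnion (fun i =>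
            (univ.filter fun r' : Fin m => ∃ j, A r' ⟨i, j⟩ ≠ 0).erase r) := by
          intro r' hr'
          rw [hD, Finset.mem_filter] at hr'
          obtain ⟨hr'T, i, hiS, j, hAij⟩ := hr'
          apply Finset.mem_biUnion.2 ⟨i, hiS, ?_⟩
          rw [Finset.mem_erase]
          exact ⟨fun h => hr (h ▸ hr'T), Finset.mem_filter.2 ⟨Finset.mem_univ _, j, hAij⟩⟩
        calc D.card ≤ (S.biUnion (fun i =>
              (univ.filter fun r' : Fin m => ∃ j, A r' ⟨i, j⟩ ≠ 0).erase r)).card :=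
              Finset.card_le_card hsub
          _ ≤ ∑ i ∈ S, ((univ.filter fun r' : Fin m => ∃ j, A r' ⟨i, j⟩ ≠ 0).erase r).card :=
              Finset.card_biUnion_le
          _ ≤ ∑ i ∈ S, (t-1) := by
              apply Finset.sum_le_sum
              intro i hiS
              have hrmem : r ∈ univ.filter fun r' : Fin m => ∃ j, A r' ⟨i, j⟩ ≠ 0 :=
                Finset.mem_filter.2 ⟨Finset.mem_univ _, hsupp i hiS⟩
              rw [Finset.card_erase_of_mem hrmem]
              exact Nat.sub_le_sub_right (hrows i) 1
          _ = K := by rw [Finset.sum_const, hcardS, smul_eq_mul]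
      set W := T \ D with hW
      have hWT : W ⊆ T := Finset.sdiff_subset
      have hTWcard : T.card - W.card = D.card := by
        rw [hW, Finset.card_sdiff_of_subset hDsub]
        have h1 := Finset.card_le_card hDsub
        omega
      have chain := mipChain x A b k q (le_of_lt hq1) hx0 T H D.card W hWT hTWcard
      -- zero rows of W on S-blocks
      have hzero : ∀ r' ∈ W, ∀ i ∈ S, ∀ j, A r' ⟨i, j⟩ = 0 := by
        intro r' hr' i hi j
        rw [hW, Finset.mem_sdiff] at hr'
        by_contra hc
        exact hr'.2 (Finset.mem_filter.2 ⟨hr'.1, i, hi, j, hc⟩)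
      -- indicator function
      set ind : (∀ i : Fin n, Fin (ℓ i)) → ℝ :=
        fun ω => if ω ∈ mipGood A b k W then 1 else 0 with hind
      have hgS : ∀ ω ω' : ∀ i : Fin n, Fin (ℓ i),
          (∀ i ∉ S, ω i = ω' i) → ind ω = ind ω' := by
        intro ω ω' hagree
        have hmem : ω ∈ mipGood A b k W ↔ ω' ∈ mipGood A b k W := by
          rw [mipGood, Finset.mem_filter, Finset.mem_filter]
          have hroweq : ∀ r' ∈ W, mipRow A r' ω = mipRow A r' ω' := by
            intro r' hr'
            rw [mipRow, mipRow]
            apply Finset.sum_congr rfl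
            intro i _
            by_cases hiS : i ∈ S
            · rw [hzero r' hr' i hiS, hzero r' hr' i hiS]
            · rw [hagree i hiS]
          constructor
          · intro h
            exact ⟨Finset.mem_univ _, fun r' hr' => (hroweq r' hr') ▸ h.2 r' hr'⟩
          · intro h
            exact ⟨Finset.mem_univ _, fun r' hr' => (hroweq r' hr') ▸ h.2 r' hr'⟩
        simp only [hind]
        simp only [hmem]
      have hfact := fact_step x hblock S (fun i j => A r ⟨i, j⟩) ind hgS
      -- translate both sides of hfact
      have lhs_eq : ∑ ω : ∀ i : Fin n, Fin (ℓ i),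
          (∏ i, x ⟨i, ω i⟩) * ((∏ i ∈ S, A r ⟨i, ω i⟩) * ind ω)
          = ∑ ω ∈ mipGood A b k W, mipW x ω * ∏ i ∈ S, A r ⟨i, ω i⟩ := by
        have h1 : ∀ ω : ∀ i : Fin n, Fin (ℓ i),
            (∏ i, x ⟨i, ω i⟩) * ((∏ i ∈ S, A r ⟨i, ω i⟩) * ind ω)
            = if ω ∈ mipGood A b k W then mipW x ω * ∏ i ∈ S, A r ⟨i, ω i⟩ else 0 := by
          intro ω
          simp only [hind]
          by_cases hmem : ω ∈ mipGood A b k W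
          · rw [if_pos hmem, if_pos hmem, mipW]; ring
          · rw [if_neg hmem, if_neg hmem]; ring
        rw [Finset.sum_congr rfl (fun ω _ => h1 ω), Finset.sum_ite_mem,
          Finset.univ_inter]
      have rhs_eq : ∑ ω : ∀ i : Fin n, Fin (ℓ i), (∏ i, x ⟨i, ω i⟩) * ind ω
          = mipPr x A b k W := by
        have h1 : ∀ ω : ∀ i : Fin n, Fin (ℓ i),
            (∏ i, x ⟨i, ω i⟩) * ind ω
            = if ω ∈ mipGood A b k W then mipW x ω else 0 := by
          intro ω
          simp only [hind]
          by_cases hmem : ω ∈ mipGood A b k W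
          · rw [if_pos hmem, if_pos hmem, mipW]; ring
          · rw [if_neg hmem, if_neg hmem]; ring
        rw [Finset.sum_congr rfl (fun ω _ => h1 ω), Finset.sum_ite_mem,
          Finset.univ_inter, mipPr]
      have hfact' : ∑ ω ∈ mipGood A b k W, mipW x ω * ∏ i ∈ S, A r ⟨i, ω i⟩
          = (∏ i ∈ S, μ i) * mipPr x A b k W := by
        rw [← lhs_eq, ← rhs_eq, hfact]
      have hsum_le : ∑ ω ∈ mipGood A b k T, mipW x ω * ∏ i ∈ S, A r ⟨i, ω i⟩
          ≤ ∑ ω ∈ mipGood A b k W, mipW x ω * ∏ i ∈ S, A r ⟨i, ω i⟩ := by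
        apply Finset.sum_le_sum_of_subset_of_nonneg (mipGood_mono A b k hWT)
        intro ω _ _
        exact mul_nonneg (mipW_nonneg x hx0 ω) (Finset.prod_nonneg fun i _ => hA0 r _)
      have hPrW0 : 0 ≤ mipPr x A b k W := mipPr_nonneg x A b k hx0 W
      have hpowsplit : (1-q)^K = (1-q)^(K - D.card) * (1-q)^(D.card) := by
        rw [← pow_add, Nat.sub_add_cancel hDcard]
      have hpow_le1 : (1-q)^(K - D.card) ≤ 1 :=
        pow_le_one₀ (le_of_lt h1q0) (by linarith)
      calc (1-q)^K * ∑ ω ∈ mipGood A b k T, mipW x ω * ∏ i ∈ S, A r ⟨i, ω i⟩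
          ≤ (1-q)^K * ∑ ω ∈ mipGood A b k W, mipW x ω * ∏ i ∈ S, A r ⟨i, ω i⟩ := by
            apply mul_le_mul_of_nonneg_left hsum_le (by positivity)
        _ = (∏ i ∈ S, μ i) * ((1-q)^(K - D.card) * ((1-q)^(D.card) * mipPr x A b k W)) := by
            rw [hfact', hpowsplit]; ring
        _ ≤ (∏ i ∈ S, μ i) * ((1-q)^(K - D.card) * mipPr x A b k T) := by
            apply mul_le_mul_of_nonneg_left _ hμSnn
            apply mul_le_mul_of_nonneg_left chain (by positivity)
        _ ≤ (∏ i ∈ S, μ i) * mipPr x A b k T := by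
            apply mul_le_mul_of_nonneg_left _ hμSnn
            nlinarith [hpow_le1, hPrT]
    · -- degenerate case: some block in S has all-zero coefficients in row r
      push_neg at hsupp
      obtain ⟨i₁, hi₁S, hAzero⟩ := hsupp
      have hzero : ∑ ω ∈ mipGood A b k T, mipW x ω * ∏ i ∈ S, A r ⟨i, ω i⟩ = 0 := by
        apply Finset.sum_eq_zero
        intro ω _
        rw [Finset.prod_eq_zero hi₁S (hAzero (ω i₁)), mul_zero]
      rw [hzero, mul_zero]
      exact mul_nonneg hμSnn hPrT
  -- Step (d): sum over certificates
  have step_d : (1-q)^K * ((k.factorial : ℝ) * ∑ ω ∈ mipGood A b k T, mipW x ω * esym ω)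
      ≤ b r ^ k * mipPr x A b k T := by
    rw [step_b]
    have hswap : (1-q)^K * ((k.factorial : ℝ) * ∑ S ∈ (univ : Finset (Fin n)).powersetCard k,
          ∑ ω ∈ mipGood A b k T, mipW x ω * ∏ i ∈ S, A r ⟨i, ω i⟩)
        = (k.factorial : ℝ) * ∑ S ∈ (univ : Finset (Fin n)).powersetCard k,
          ((1-q)^K * ∑ ω ∈ mipGood A b k T, mipW x ω * ∏ i ∈ S, A r ⟨i, ω i⟩) := by
      rw [← Finset.mul_sum]
      ring
    rw [hswap]
    calc (k.factorial : ℝ) * ∑ S ∈ (univ : Finset (Fin n)).powersetCard k,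
          ((1-q)^K * ∑ ω ∈ mipGood A b k T, mipW x ω * ∏ i ∈ S, A r ⟨i, ω i⟩)
        ≤ (k.factorial : ℝ) * ∑ S ∈ (univ : Finset (Fin n)).powersetCard k,
          ((∏ i ∈ S, μ i) * mipPr x A b k T) := by
          apply mul_le_mul_of_nonneg_left (Finset.sum_le_sum step_c) (Nat.cast_nonneg _)
      _ = ((k.factorial : ℝ) * ∑ S ∈ (univ : Finset (Fin n)).powersetCard k,
          ∏ i ∈ S, μ i) * mipPr x A b k T := by
          rw [← Finset.sum_mul]; ring
      _ ≤ (∑ i, μ i)^k * mipPr x A b k T := by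
          apply mul_le_mul_of_nonneg_right (esymm_le univ μ hμ0 k) hPrT
      _ = b r ^ k * mipPr x A b k T := by rw [hμsum]
  -- conclusion
  have hfinal : mipBad x A b k r T * (Crow * (1-q)^K)
      ≤ (q * mipPr x A b k T) * (Crow * (1-q)^K) := by
    calc mipBad x A b k r T * (Crow * (1-q)^K)
        = (mipBad x A b k r T * Crow) * (1-q)^K := by ring
      _ ≤ ((k.factorial : ℝ) * ∑ ω ∈ mipGood A b k T, mipW x ω * esym ω) * (1-q)^K := by
          apply mul_le_mul_of_nonneg_right step_a (by positivity)
      _ = (1-q)^K * ((k.factorial : ℝ) * ∑ ω ∈ mipGood A b k T, mipW x ω * esym ω) := by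
          ring
      _ ≤ b r ^ k * mipPr x A b k T := step_d
      _ ≤ (q * (1-q)^K * Crow) * mipPr x A b k T := by
          apply mul_le_mul_of_nonneg_right (hkey r) hPrT
      _ = (q * mipPr x A b k T) * (Crow * (1-q)^K) := by ring
  exact le_of_mul_le_mul_right hfinal (by positivity)




lemma mipII
    (hA : ∀ r j, A r j ∈ Set.Icc (0:ℝ) 1)
    (hx : ∀ j, x j ∈ Set.Icc (0:ℝ) 1)
    (hblock : ∀ i : Fin n, ∑ j : Fin (ℓ i), x ⟨i, j⟩ = 1)
    (hb : ∀ r, b r = ∑ j, A r j * x j)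
    (hbpos : ∀ r, 0 < b r)
    (hk : 0 < k)
    (t : ℕ) (q : ℝ) (hq0 : 0 < q) (hq1 : q < 1)
    (hrows : ∀ i : Fin n, (univ.filter fun r' : Fin m => ∃ j, A r' ⟨i, j⟩ ≠ 0).card ≤ t)
    (hkey : ∀ r, b r ^ k ≤ (q * (1-q)^(k*(t-1))) * ∏ j ∈ range k, (b r + k - (j:ℝ))) :
    ∀ (T : Finset (Fin m)) (r : Fin m), r ∉ T →
      mipBad x A b k r T ≤ q * mipPr x A b k T := by
  have main : ∀ (N : ℕ) (T : Finset (Fin m)), T.card ≤ N → ∀ r ∉ T,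
      mipBad x A b k r T ≤ q * mipPr x A b k T := by
    intro N
    induction N with
    | zero =>
      intro T hT r hrT
      apply mipStep x A b k hA hx hblock hb hbpos hk t q hq0 hq1 hrows hkey T ?_ r hrT
      intro U r' hU hr'
      exfalso
      have : T = ∅ := Finset.card_eq_zero.1 (Nat.le_zero.1 hT)
      subst this
      exact Finset.not_ssubset_empty U hU
    | succ N ih =>
      intro T hT r hrT
      apply mipStep x A b k hA hx hblock hb hbpos hk t q hq0 hq1 hrows hkey T ?_ r hrT
      intro U r' hU hr'U
      exact ih U (by have := Finset.card_lt_card hU; omega) r' hr'U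
  intro T r hrT
  exact main T.card T le_rfl r hrT

lemma mip_exists_good
    (hA : ∀ r j, A r j ∈ Set.Icc (0:ℝ) 1)
    (hx : ∀ j, x j ∈ Set.Icc (0:ℝ) 1)
    (hblock : ∀ i : Fin n, ∑ j : Fin (ℓ i), x ⟨i, j⟩ = 1)
    (hb : ∀ r, b r = ∑ j, A r j * x j)
    (hbpos : ∀ r, 0 < b r)
    (hk : 0 < k)
    (t : ℕ) (q : ℝ) (hq0 : 0 < q) (hq1 : q < 1)
    (hrows : ∀ i : Fin n, (univ.filter fun r' : Fin m => ∃ j, A r' ⟨i, j⟩ ≠ 0).card ≤ t)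
    (hkey : ∀ r, b r ^ k ≤ (q * (1-q)^(k*(t-1))) * ∏ j ∈ range k, (b r + k - (j:ℝ))) :
    ∃ ω : ∀ i : Fin n, Fin (ℓ i), ∀ r : Fin m, mipRow A r ω ≤ b r + k := by
  have hx0 : ∀ j, 0 ≤ x j := fun j => (hx j).1
  have II := mipII x A b k hA hx hblock hb hbpos hk t q hq0 hq1 hrows hkey
  -- positivity of the empty probability
  have hωpos : ∀ i : Fin n, ∃ j : Fin (ℓ i), 0 < x ⟨i, j⟩ := by
    intro i
    have hne : (∑ j : Fin (ℓ i), x ⟨i, j⟩) ≠ 0 := by rw [hblock i]; norm_num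
    obtain ⟨j, _, hj⟩ := Finset.exists_ne_zero_of_sum_ne_zero hne
    exact ⟨j, lt_of_le_of_ne (hx0 _) (Ne.symm hj)⟩
  choose ω₀ hω₀ using hωpos
  have hω₀good : ω₀ ∈ mipGood A b k (∅ : Finset (Fin m)) := by
    rw [mipGood, Finset.mem_filter]
    exact ⟨Finset.mem_univ _, fun r hr => absurd hr (Finset.notMem_empty r)⟩
  have hPrempty : 0 < mipPr x A b k (∅ : Finset (Fin m)) := by
    have h1 : 0 < mipW x ω₀ := Finset.prod_pos fun i _ => hω₀ i
    have h2 : mipW x ω₀ ≤ mipPr x A b k ∅ :=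
      Finset.single_le_sum (fun ω _ => mipW_nonneg x hx0 ω) hω₀good
    linarith
  have chain := mipChain x A b k q (le_of_lt hq1) hx0 (univ : Finset (Fin m))
    (fun U r' _ h => II U r' h) (univ : Finset (Fin m)).card ∅ (Finset.empty_subset _)
    (by simp)
  have hPruniv : 0 < mipPr x A b k (univ : Finset (Fin m)) := by
    have hpow : (0:ℝ) < (1-q)^(univ : Finset (Fin m)).card := by
      have : (0:ℝ) < 1 - q := by linarith
      positivity
    nlinarith [chain, hPrempty]
  have hne : (mipGood A b k (univ : Finset (Fin m))).Nonempty := by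
    by_contra h
    rw [Finset.not_nonempty_iff_eq_empty] at h
    rw [mipPr, h, Finset.sum_empty] at hPruniv
    exact lt_irrefl 0 hPruniv
  obtain ⟨ω, hω⟩ := hne
  rw [mipGood, Finset.mem_filter] at hω
  exact ⟨ω, fun r => hω.2 r (Finset.mem_univ r)⟩




end MIP


/-- Consider an MIP with matrix `A ∈ [0,1]^{m×N}` (columns indexed by the
pairs `(i,j)`, `i ∈ [n]`, `j ∈ [ℓ_i]`) and a fractional solution `x*` whose block sums are 1.
Let `b = Ax*` with `b_r > 0` for all `r`, `y* = max_r b_r`, and let `t` be the maximum over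
`i ∈ [n]` of the number of rows of `A` having a nonzero coefficient on some column `(i,j)`.
Then for every positive integer `k` with `G(y*, k/y*) ≤ 1/(e·k·t)` there is a 0-1 vector `z`
with exactly one 1 per block such that `(Az)_r ≤ b_r + k` for every `r`. -/
theorem mip_rounding_via_extended_LLL
    (n m : ℕ) (ℓ : Fin n → ℕ) (hℓ : ∀ i, 0 < ℓ i)
    (A : Fin m → (Σ i : Fin n, Fin (ℓ i)) → ℝ)
    (hA : ∀ r j, A r j ∈ Set.Icc (0 : ℝ) 1)
    (x : (Σ i : Fin n, Fin (ℓ i)) → ℝ)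
    (hx : ∀ j, x j ∈ Set.Icc (0 : ℝ) 1)
    (hblock : ∀ i : Fin n, ∑ j : Fin (ℓ i), x ⟨i, j⟩ = 1)
    (b : Fin m → ℝ) (hb : ∀ r, b r = ∑ j, A r j * x j)
    (hbpos : ∀ r, 0 < b r)
    (ystar : ℝ) (hystar : IsGreatest (Set.range b) ystar)
    (t : ℕ)
    (ht : t = Finset.univ.sup (fun i : Fin n =>
      (Finset.univ.filter (fun r : Fin m => ∃ j : Fin (ℓ i), A r ⟨i, j⟩ ≠ 0)).card))
    (k : ℕ) (hk : 0 < k)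
    (hG : chernoffG ystar (k / ystar) ≤ 1 / (Real.exp 1 * k * t)) :
    ∃ z : (Σ i : Fin n, Fin (ℓ i)) → ℝ,
      (∀ j, z j = 0 ∨ z j = 1) ∧
      (∀ i : Fin n, ∑ j : Fin (ℓ i), z ⟨i, j⟩ = 1) ∧
      (∀ r, ∑ j, A r j * z j ≤ b r + k) := by
  classical
  obtain ⟨r₀, hr₀⟩ := hystar.1
  have hy0 : 0 < ystar := hr₀ ▸ hbpos r₀
  have hδ : 0 < (k:ℝ)/ystar := by
    have : (0:ℝ) < k := by exact_mod_cast hk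
    positivity
  have hGy0 : 0 < chernoffG ystar ((k:ℝ)/ystar) := chernoffG_pos ystar _ hδ
  have ht1 : 1 ≤ t := by
    by_contra h
    have ht0 : t = 0 := by omega
    rw [ht0] at hG
    simp only [Nat.cast_zero, mul_zero, div_zero] at hG
    linarith
  obtain ⟨q, hq0, hq1, hqG⟩ := qkey k t hk ht1 _ hGy0 hG
  have hrows : ∀ i : Fin n,
      (univ.filter fun r' : Fin m => ∃ j, A r' ⟨i, j⟩ ≠ 0).card ≤ t := by
    intro i
    rw [ht]
    exact Finset.le_sup (f := fun i : Fin n =>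
      (Finset.univ.filter (fun r : Fin m => ∃ j : Fin (ℓ i), A r ⟨i, j⟩ ≠ 0)).card)
      (Finset.mem_univ i)
  have hkey : ∀ r, b r ^ k ≤ (q * (1-q)^(k*(t-1))) * ∏ j ∈ range k, (b r + k - (j:ℝ)) := by
    intro r
    have h1 := chern_bound k hk ystar (b r) (hbpos r) (hystar.2 ⟨r, rfl⟩)
    have hCrow0 : 0 ≤ ∏ j ∈ range k, (b r + k - (j:ℝ)) := by
      apply Finset.prod_nonneg
      intro j hj
      rw [Finset.mem_range] at hj
      have : (j:ℝ) + 1 ≤ (k:ℝ) := by exact_mod_cast hj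
      have := hbpos r
      linarith
    calc b r ^ k ≤ chernoffG ystar ((k:ℝ)/ystar) * ∏ j ∈ range k, (b r + k - (j:ℝ)) := h1
      _ ≤ (q * (1-q)^(k*(t-1))) * ∏ j ∈ range k, (b r + k - (j:ℝ)) :=
          mul_le_mul_of_nonneg_right hqG hCrow0
  obtain ⟨ω, hω⟩ := mip_exists_good x A b k hA hx hblock hb hbpos hk t q hq0 hq1 hrows hkey
  refine ⟨fun p => if ω p.1 = p.2 then 1 else 0, ?_, ?_, ?_⟩
  · intro j
    by_cases h : ω j.1 = j.2
    · right; simp [h]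
    · left; simp [h]
  · intro i
    simp
  · intro r
    have hsum : ∑ j : (Σ i : Fin n, Fin (ℓ i)), A r j * (if ω j.1 = j.2 then (1:ℝ) else 0)
        = mipRow A r ω := by
      rw [← Finset.univ_sigma_univ, Finset.sum_sigma, mipRow]
      apply Finset.sum_congr rfl
      intro i _
      have h1 : ∀ j : Fin (ℓ i), A r ⟨i, j⟩ * (if ω i = j then (1:ℝ) else 0)
          = if ω i = j then A r ⟨i, j⟩ else 0 := by
        intro j
        by_cases h : ω i = j
        · rw [if_pos h, if_pos h, mul_one]
        · rw [if_neg h, if_neg h, mul_zero]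
      rw [Finset.sum_congr rfl (fun j _ => h1 j), Finset.sum_ite_eq]
      simp
    rw [hsum]
    exact hω r
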